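/- Let A=(ρ,s,s',{V_j},{r_j}) be an atlas in ℝ^N, ω a modulus of continuity and M>0, and let Ã=(ρ/2, s, s', {(V_j)_{ρ/2}}, {r_j}) be the derived atlas. Then there exists a constant c>0, depending only on N, A, ω and M, such that for all Ω₁,Ω₂∈C_M^{ω}(A) (which also belong to C(Ã)): d^{HP}(∂Ω₁,∂Ω₂) ≤ d_{Ã}(Ω₁,Ω₂) ≤ c·ω(d_{HP}(∂Ω₁,∂Ω₂)), where d^{HP} is the Hausdorff–Pompeiu distance and d_{HP} the lower Hausdorff–Pompeiu deviation. -/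

import Mathlib

open MeasureTheory Set Filter
noncomputable section
open scoped Classical

abbrev EV (N : ℕ) := EuclideanSpace ℝ (Fin N)

def ebasis (N : ℕ) (i : Fin N) : EV N := EuclideanSpace.single i 1

/-- partial derivative of a scalar function in the `i`-th coordinate direction -/
def pder {N : ℕ} (i : Fin N) (f : EV N → ℝ) : EV N → ℝ :=
  fun x => fderiv ℝ f x (ebasis N i)

/-- `(i,j)` entry of the Jacobian matrix of `β` at `x` -/
def jacEntry {N : ℕ} (β : EV N → EV N) (x : EV N) (i j : Fin N) : ℝ :=
  fderiv ℝ β x (ebasis N j) i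

/-- squared Frobenius norm of the Jacobian matrix of `β` at `x` -/
def frobSq {N : ℕ} (β : EV N → EV N) (x : EV N) : ℝ :=
  ∑ i, ∑ j, (jacEntry β x i j)^2

/-- divergence of `β` at `x` -/
def divg {N : ℕ} (β : EV N → EV N) (x : EV N) : ℝ :=
  ∑ i, jacEntry β x i i

/-- An atlas in `ℝ^N`: `s` rotated cuboids, described by boxes `∏ (a j i, b j i)`
and isometries `r j`, with parameter `ρ` and `s'` boundary charts (so that
`V j := (r j)⁻¹ (box j)` and `r j (V j)` is the box). -/
structure Atlas (N : ℕ) where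
  dimpos : 0 < N
  ρ : ℝ
  ρpos : 0 < ρ
  s : ℕ
  spos : 0 < s
  s' : ℕ
  s'le : s' ≤ s
  a : Fin s → Fin N → ℝ
  b : Fin s → Fin N → ℝ
  ab : ∀ j i, a j i < b j i
  r : Fin s → (EV N ≃ᵢ EV N)

namespace Atlas

variable {N : ℕ} (A : Atlas N)

/-- the index of the last coordinate -/
def last : Fin N := ⟨N - 1, Nat.sub_lt A.dimpos Nat.one_pos⟩

/-- the box `r j (V j)` -/
def box (j : Fin A.s) : Set (EV N) :=
  {x | ∀ i, A.a j i < x i ∧ x i < A.b j i}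

/-- the cuboid `V j` -/
def V (j : Fin A.s) : Set (EV N) := (A.r j).symm '' A.box j

/-- the open cylinder `W_j × ℝ` (in the rotated coordinates of the `j`-th chart) -/
def cyl (j : Fin A.s) : Set (EV N) :=
  {x | ∀ i, i ≠ A.last → (A.a j i < x i ∧ x i < A.b j i)}

/-- the closed cylinder `cl(W_j) × ℝ` (in the rotated coordinates of the `j`-th chart) -/
def cylClosed (j : Fin A.s) : Set (EV N) :=
  {x | ∀ i, i ≠ A.last → (A.a j i ≤ x i ∧ x i ≤ A.b j i)}

end Atlas

/-- `(V)_δ = {x ∈ V : d(x, ∂V) > δ}` -/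
def innerPart {N : ℕ} (V : Set (EV N)) (δ : ℝ) : Set (EV N) :=
  {x ∈ V | δ < Metric.infDist x (frontier V)}

/-- `(V)^δ = {x : d(x,V) < δ}` -/
def outerPart {N : ℕ} (V : Set (EV N)) (δ : ℝ) : Set (EV N) :=
  {x | Metric.infDist x V < δ}

/-- the describing functions `g j` of `Ω` relative to the atlas `A`:
in the rotated coordinates of the `j`-th chart, `Ω ∩ V j` is the subgraph of `g j`,
a continuous function of the first `N-1` coordinates, with the required bounds. -/
structure AtlasDescribes {N : ℕ} (A : Atlas N) (Ω : Set (EV N))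
    (g : Fin A.s → EV N → ℝ) : Prop where
  cont : ∀ j, ContinuousOn (g j) (A.cylClosed j)
  barOnly : ∀ j (x y : EV N), (∀ i, i ≠ A.last → x i = y i) → g j x = g j y
  bddAway : ∀ j : Fin A.s, (j : ℕ) < A.s' → ∀ x ∈ A.cylClosed j,
    A.a j A.last + A.ρ ≤ g j x ∧ g j x ≤ A.b j A.last - A.ρ
  flat : ∀ j : Fin A.s, A.s' ≤ (j : ℕ) → ∀ x, g j x = A.b j A.last
  graph : ∀ j, A.r j '' (Ω ∩ A.V j) =
    {x | (∀ i, i ≠ A.last → (A.a j i < x i ∧ x i < A.b j i)) ∧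
         A.a j A.last < x A.last ∧ x A.last < g j x}

/-- `Ω` belongs to the class `C(A)`, with describing functions `g` -/
structure InAtlasClass {N : ℕ} (A : Atlas N) (Ω : Set (EV N))
    (g : Fin A.s → EV N → ℝ) : Prop where
  isOpen : IsOpen Ω
  cover : Ω ⊆ ⋃ j, innerPart (A.V j) A.ρ
  meets : ∀ j, (innerPart (A.V j) A.ρ ∩ Ω).Nonempty
  bdryMeets : ∀ j : Fin A.s, (j : ℕ) < A.s' → (A.V j ∩ frontier Ω).Nonempty
  bdryMisses : ∀ j : Fin A.s, A.s' ≤ (j : ℕ) → A.V j ∩ frontier Ω = ∅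
  describes : AtlasDescribes A Ω g

/-- the atlas distance `d_A`, computed from describing functions -/
def atlasDist {N : ℕ} (A : Atlas N) (g₁ g₂ : Fin A.s → EV N → ℝ) : ℝ :=
  sSup {d : ℝ | ∃ j, ∃ x ∈ A.cyl j, d = |g₁ j x - g₂ j x|}

/-- a modulus of continuity -/
structure IsModulus (ω : ℝ → ℝ) : Prop where
  cont : ContinuousOn ω (Ici 0)
  mono : MonotoneOn ω (Ici 0)
  zero : ω 0 = 0
  lin : ∃ k > 0, ∀ τ ∈ Icc (0:ℝ) 1, k * τ ≤ ω τ

/-- Euclidean distance between the projections of `x` and `y` onto the first `N-1`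
coordinates (in rotated coordinates) -/
def barDist {N : ℕ} (A : Atlas N) (x y : EV N) : ℝ :=
  Real.sqrt (∑ i ∈ Finset.univ.erase A.last, (x i - y i)^2)

/-- the describing functions satisfy the `ω`-modulus condition with constant `M`;
together with `InAtlasClass` this says `Ω ∈ C_M^{ω}(A)` -/
def HolderDescribed {N : ℕ} (A : Atlas N) (M : ℝ) (ω : ℝ → ℝ)
    (g : Fin A.s → EV N → ℝ) : Prop :=
  ∀ j, ∀ x ∈ A.cylClosed j, ∀ y ∈ A.cylClosed j,
    |g j x - g j y| ≤ M * ω (barDist A x y)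

/-- the deviation `sup_{x ∈ S} d(x,T)` -/
def devSet {N : ℕ} (S T : Set (EV N)) : ℝ :=
  sSup ((fun x => Metric.infDist x T) '' S)

/-- the lower Hausdorff–Pompeiu deviation -/
def lowerHP {N : ℕ} (S T : Set (EV N)) : ℝ := min (devSet S T) (devSet T S)

/-- the Hausdorff–Pompeiu distance -/
def upperHP {N : ℕ} (S T : Set (EV N)) : ℝ := max (devSet S T) (devSet T S)

/-- the open cylinder of the `j`-th chart for the derived atlas
`Ã = (ρ/2, s, s', {(V_j)_{ρ/2}}, {r_j})` (in rotated coordinates) -/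
def Atlas.cylSmall {N : ℕ} (A : Atlas N) (j : Fin A.s) : Set (EV N) :=
  {x | ∀ i, i ≠ A.last → (A.a j i + A.ρ/2 < x i ∧ x i < A.b j i - A.ρ/2)}

/-- the atlas distance `d_Ã` for the derived atlas, computed from describing functions -/
def atlasDistSmall {N : ℕ} (A : Atlas N) (g₁ g₂ : Fin A.s → EV N → ℝ) : ℝ :=
  sSup {d : ℝ | ∃ j, ∃ x ∈ A.cylSmall j, d = |g₁ j x - g₂ j x|}

-- ===== auxiliary lemmas =====
section Aux
open Metric Bornology

variable {N : ℕ}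

lemma aux_coord_dist_le (x y : EV N) (i : Fin N) : |x i - y i| ≤ dist x y := by
  rw [EuclideanSpace.dist_eq, ← Real.sqrt_sq_eq_abs]
  apply Real.sqrt_le_sqrt
  have h : (x i - y i)^2 = dist (x i) (y i)^2 := by rw [Real.dist_eq, sq_abs]
  rw [h]
  exact Finset.single_le_sum (f := fun k => dist (x k) (y k)^2)
    (fun k _ => sq_nonneg _) (Finset.mem_univ i)

lemma aux_dist_eq_of_eq (x y : EV N) (i : Fin N) (h : ∀ k, k ≠ i → x k = y k) :
    dist x y = |x i - y i| := by
  rw [EuclideanSpace.dist_eq, Finset.sum_eq_single i]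
  · rw [Real.dist_eq, Real.sqrt_sq_eq_abs, abs_abs]
  · intro k _ hk; rw [h k hk]; simp
  · simp

lemma aux_barDist_nonneg (A : Atlas N) (x y : EV N) : 0 ≤ barDist A x y :=
  Real.sqrt_nonneg _

lemma aux_barDist_le_dist (A : Atlas N) (x y : EV N) : barDist A x y ≤ dist x y := by
  rw [barDist, EuclideanSpace.dist_eq]
  apply Real.sqrt_le_sqrt
  have h : ∀ k : Fin N, (x k - y k)^2 = dist (x k) (y k)^2 := by
    intro k; rw [Real.dist_eq, sq_abs]
  calc ∑ i ∈ Finset.univ.erase A.last, (x i - y i)^2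
      = ∑ i ∈ Finset.univ.erase A.last, dist (x i) (y i)^2 := by
        exact Finset.sum_congr rfl (fun k _ => h k)
    _ ≤ ∑ i, dist (x i) (y i)^2 := by
        exact Finset.sum_le_sum_of_subset_of_nonneg (Finset.erase_subset _ _)
          (fun k _ _ => sq_nonneg _)

lemma aux_box_eq_pi (A : Atlas N) (j : Fin A.s) :
    A.box j = WithLp.ofLp ⁻¹' (Set.pi univ (fun i => Ioo (A.a j i) (A.b j i))) := by
  ext x; exact ⟨fun h i _ => h i, fun h i => h i (mem_univ i)⟩

lemma aux_box_open (A : Atlas N) (j : Fin A.s) : IsOpen (A.box j) := by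
  rw [aux_box_eq_pi]
  exact (isOpen_set_pi finite_univ (fun i _ => isOpen_Ioo)).preimage (PiLp.continuous_ofLp 2 _)

lemma aux_box_closure (A : Atlas N) (j : Fin A.s) :
    closure (A.box j) = WithLp.ofLp ⁻¹' (Set.pi univ (fun i => Icc (A.a j i) (A.b j i))) := by
  rw [aux_box_eq_pi, show (WithLp.ofLp ⁻¹' Set.pi univ (fun i => Ioo (A.a j i) (A.b j i)) : Set (EV N)) = PiLp.homeomorph 2 (fun _ : Fin N => ℝ) ⁻¹' Set.pi univ (fun i => Ioo (A.a j i) (A.b j i)) from rfl, ← Homeomorph.preimage_closure, closure_pi_set]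
  exact congrArg (fun S => WithLp.ofLp ⁻¹' S) (Set.pi_congr rfl (fun i _ => closure_Ioo (A.ab j i).ne))

lemma aux_box_sub_cylClosed (A : Atlas N) (j : Fin A.s) : A.box j ⊆ A.cylClosed j :=
  fun x hx i _ => ⟨(hx i).1.le, (hx i).2.le⟩

lemma aux_cylSmall_sub_cylClosed (A : Atlas N) (j : Fin A.s) :
    A.cylSmall j ⊆ A.cylClosed j := by
  intro x hx i hi
  have h := hx i hi
  have hρ : 0 < A.ρ := A.ρpos
  constructor <;> nlinarith [h.1, h.2]

lemma aux_box_bounded (A : Atlas N) (j : Fin A.s) : IsBounded (A.box j) := by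
  set y0 : EV N := (WithLp.equiv 2 (Fin N → ℝ)).symm (A.a j) with hy0
  have hy0i : ∀ i, y0 i = A.a j i := fun i => rfl
  apply (Metric.isBounded_closedBall
    (x := y0) (r := Real.sqrt (∑ i, (A.b j i - A.a j i)^2))).subset
  intro x hx
  rw [Metric.mem_closedBall, EuclideanSpace.dist_eq]
  apply Real.sqrt_le_sqrt
  apply Finset.sum_le_sum
  intro i _
  rw [Real.dist_eq]
  rw [sq_abs]
  have h1 := (hx i).1
  have h2 := (hx i).2
  rw [hy0i i]
  nlinarith

lemma aux_V_open (A : Atlas N) (j : Fin A.s) : IsOpen (A.V j) := by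
  exact ((A.r j).symm.toHomeomorph.isOpen_image).mpr (aux_box_open A j)

lemma aux_V_bounded (A : Atlas N) (j : Fin A.s) : IsBounded (A.V j) :=
  ((A.r j).symm.isometry.lipschitz.isBounded_image (aux_box_bounded A j))

lemma aux_frontier_V (A : Atlas N) (j : Fin A.s) :
    frontier (A.V j) = (A.r j).symm '' frontier (A.box j) :=
  ((A.r j).symm.toHomeomorph.image_frontier _).symm

lemma aux_mem_box_of_mem_V (A : Atlas N) (j : Fin A.s) {x : EV N} (hx : x ∈ A.V j) :
    A.r j x ∈ A.box j := by
  obtain ⟨z, hz, rfl⟩ := hx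
  simpa using hz

end Aux
section Aux2
open Metric Bornology

variable {N : ℕ}

/-- The `ρ`-deep closed part of chart `j`. -/
def Kdeep (A : Atlas N) (j : Fin A.s) : Set (EV N) :=
  closure (A.V j) ∩ {x | A.ρ ≤ infDist x (frontier (A.V j))}

lemma aux_K_closed (A : Atlas N) (j : Fin A.s) : IsClosed (Kdeep A j) :=
  isClosed_closure.inter (isClosed_le continuous_const (continuous_infDist_pt _))

lemma aux_K_sub_V (A : Atlas N) (j : Fin A.s) : Kdeep A j ⊆ A.V j := by
  rintro x ⟨hx1, hx2⟩
  by_contra hxV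
  have hfr : x ∈ frontier (A.V j) := by
    rw [(aux_V_open A j).frontier_eq]
    exact ⟨hx1, hxV⟩
  have h0 : infDist x (frontier (A.V j)) = 0 := infDist_zero_of_mem hfr
  have : A.ρ ≤ (0:ℝ) := h0 ▸ hx2
  exact absurd this (not_le.mpr A.ρpos)

lemma aux_innerPart_sub_K (A : Atlas N) (j : Fin A.s) :
    innerPart (A.V j) A.ρ ⊆ Kdeep A j :=
  fun x hx => ⟨subset_closure hx.1, hx.2.le⟩

lemma aux_frontier_sub_K {Ω : Set (EV N)} {A : Atlas N} {g : Fin A.s → EV N → ℝ}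
    (hcl : InAtlasClass A Ω g) : frontier Ω ⊆ ⋃ j, Kdeep A j := by
  have h1 : Ω ⊆ ⋃ j, Kdeep A j :=
    hcl.cover.trans (iUnion_mono (fun j => aux_innerPart_sub_K A j))
  have h2 : IsClosed (⋃ j, Kdeep A j) := isClosed_iUnion_of_finite (fun j => aux_K_closed A j)
  exact frontier_subset_closure.trans (closure_minimal h1 h2)

lemma aux_K_coords (A : Atlas N) (j : Fin A.s) {x : EV N} (hx : x ∈ Kdeep A j) :
    ∀ i, A.a j i + A.ρ ≤ (A.r j x) i ∧ (A.r j x) i ≤ A.b j i - A.ρ := by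
  have hxV : x ∈ A.V j := aux_K_sub_V A j hx
  have hybox : A.r j x ∈ A.box j := aux_mem_box_of_mem_V A j hxV
  intro i
  set y := A.r j x with hy
  have key : ∀ c : ℝ, (c = A.a j i ∨ c = A.b j i) → A.ρ ≤ |y i - c| := by
    intro c hc
    set y' : EV N := WithLp.toLp 2 (Function.update y i c) with hy'
    have hy'cl : y' ∈ closure (A.box j) := by
      rw [aux_box_closure]
      intro k _
      by_cases hk : k = i
      · subst hk
        rw [hy', WithLp.ofLp_toLp, Function.update_self]
        rcases hc with h | h <;> rw [h]
        · exact ⟨le_refl _, (A.ab j k).le⟩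
        · exact ⟨(A.ab j k).le, le_refl _⟩
      · rw [hy', WithLp.ofLp_toLp, Function.update_of_ne hk]
        exact ⟨(hybox k).1.le, (hybox k).2.le⟩
    have hy'nb : y' ∉ A.box j := by
      intro hmem
      have := hmem i
      rw [hy', WithLp.ofLp_toLp, Function.update_self] at this
      rcases hc with h | h
      · rw [h] at this; exact lt_irrefl _ this.1
      · rw [h] at this; exact lt_irrefl _ this.2
    have hy'fr : y' ∈ frontier (A.box j) := by
      rw [(aux_box_open A j).frontier_eq]; exact ⟨hy'cl, hy'nb⟩
    have hx'fr : (A.r j).symm y' ∈ frontier (A.V j) := by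
      rw [aux_frontier_V]; exact ⟨y', hy'fr, rfl⟩
    have hdist : dist x ((A.r j).symm y') = |y i - c| := by
      have h1 : dist x ((A.r j).symm y') = dist (A.r j x) (A.r j ((A.r j).symm y')) :=
        ((A.r j).dist_eq _ _).symm
      rw [h1, (A.r j).apply_symm_apply, ← hy]
      rw [aux_dist_eq_of_eq y y' i (fun k hk => (Function.update_of_ne hk _ _).symm)]
      simp only [hy', Function.update_self]
    calc A.ρ ≤ infDist x (frontier (A.V j)) := hx.2
      _ ≤ dist x ((A.r j).symm y') := infDist_le_dist_of_mem hx'fr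
      _ = |y i - c| := hdist
  constructor
  · have h := key (A.a j i) (Or.inl rfl)
    rw [abs_of_pos (sub_pos.mpr (hybox i).1)] at h
    linarith
  · have h := key (A.b j i) (Or.inr rfl)
    rw [abs_of_neg (sub_neg.mpr (hybox i).2)] at h
    linarith

lemma aux_graph_inter {Ω : Set (EV N)} {A : Atlas N} {g : Fin A.s → EV N → ℝ}
    (hd : AtlasDescribes A Ω g) (j : Fin A.s) :
    (A.r j) '' Ω ∩ A.box j =
      {x | (∀ i, i ≠ A.last → (A.a j i < x i ∧ x i < A.b j i)) ∧
         A.a j A.last < x A.last ∧ x A.last < g j x} := by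
  have h1 : (A.r j) '' (Ω ∩ A.V j) = (A.r j) '' Ω ∩ (A.r j) '' (A.V j) :=
    Set.image_inter (A.r j).injective
  have h2 : (A.r j) '' (A.V j) = A.box j := by
    rw [Atlas.V, Set.image_image]
    simp
  rw [← h2, ← h1, hd.graph j]

lemma aux_g_range {Ω : Set (EV N)} {A : Atlas N} {g : Fin A.s → EV N → ℝ}
    (hd : AtlasDescribes A Ω g) (j : Fin A.s) {x : EV N} (hx : x ∈ A.cylClosed j) :
    A.a j A.last ≤ g j x ∧ g j x ≤ A.b j A.last := by
  by_cases hj : (j : ℕ) < A.s'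
  · have h := hd.bddAway j hj x hx
    have := A.ρpos
    constructor <;> linarith [h.1, h.2]
  · rw [hd.flat j (not_lt.mp hj)]
    exact ⟨(A.ab j A.last).le, le_refl _⟩

end Aux2
section Aux3
open Metric Bornology

variable {N : ℕ}

lemma aux_omega_nonneg {ω : ℝ → ℝ} (hω : IsModulus ω) {t : ℝ} (ht : 0 ≤ t) : 0 ≤ ω t := by
  have := hω.mono (self_mem_Ici) ht ht
  rw [hω.zero] at this
  exact this

/-- Lemma A: a frontier point of `Ω` whose rotated image lies in the open box lies
on the graph of the describing function. -/
lemma aux_lemA {Ω : Set (EV N)} {A : Atlas N} {g : Fin A.s → EV N → ℝ} {M : ℝ}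
    {ω : ℝ → ℝ} (hω : IsModulus ω)
    (hop : IsOpen Ω) (hd : AtlasDescribes A Ω g) (hH : HolderDescribed A M ω g)
    (j : Fin A.s) {q : EV N} (hq : q ∈ frontier Ω) (hybox : A.r j q ∈ A.box j) :
    (A.r j q) A.last = g j (A.r j q) := by
  set y := A.r j q with hy
  have hrΩo : IsOpen ((A.r j) '' Ω) := ((A.r j).toHomeomorph.isOpen_image).mpr hop
  have himg : (A.r j) '' frontier Ω = frontier ((A.r j) '' Ω) :=
    (A.r j).toHomeomorph.image_frontier Ω
  have hyfr : y ∈ frontier ((A.r j) '' Ω) := himg ▸ ⟨q, hq, rfl⟩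
  rw [hrΩo.frontier_eq] at hyfr
  have hS := aux_graph_inter hd j
  -- y ∉ r '' Ω, so g j y ≤ y last
  have hge : g j y ≤ y A.last := by
    by_contra hlt
    push_neg at hlt
    have hyS : y ∈ (A.r j) '' Ω ∩ A.box j := by
      rw [hS]
      exact ⟨fun i _ => hybox i, (hybox A.last).1, hlt⟩
    exact hyfr.2 hyS.1
  -- y ∈ closure (r '' Ω) ∩ box ⊆ closure (r '' Ω ∩ box)
  have hycl : y ∈ closure ((A.r j) '' Ω ∩ A.box j) := by
    have h := (aux_box_open A j).inter_closure (t := (A.r j) '' Ω)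
    have : y ∈ A.box j ∩ closure ((A.r j) '' Ω) := ⟨hybox, hyfr.1⟩
    have := h this
    rwa [Set.inter_comm] at this
  obtain ⟨u, hu, hlim⟩ := mem_closure_iff_seq_limit.mp hycl
  have hubox : ∀ n, u n ∈ A.box j := fun n => (hu n).2
  have huS : ∀ n, u n A.last < g j (u n) := by
    intro n
    have := hu n
    rw [hS] at this
    · exact this.2.2
  have hdist0 : Tendsto (fun n => dist (u n) y) atTop (nhds 0) :=
    tendsto_iff_dist_tendsto_zero.mp hlim
  have h1 : Tendsto (fun n => u n A.last) atTop (nhds (y A.last)) := by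
    apply tendsto_iff_dist_tendsto_zero.mpr
    apply squeeze_zero (fun n => dist_nonneg)
      (g := fun n => dist (u n) y) _ hdist0
    intro n
    rw [Real.dist_eq]
    exact aux_coord_dist_le (u n) y A.last
  have h2 : Tendsto (fun n => g j (u n)) atTop (nhds (g j y)) := by
    apply tendsto_iff_dist_tendsto_zero.mpr
    have hbar : Tendsto (fun n => barDist A (u n) y) atTop (nhds 0) :=
      squeeze_zero (fun n => aux_barDist_nonneg A _ _)
        (fun n => aux_barDist_le_dist A _ _) hdist0
    have hbar' : Tendsto (fun n => barDist A (u n) y) atTop (nhdsWithin 0 (Ici 0)) :=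
      tendsto_nhdsWithin_iff.mpr ⟨hbar, Eventually.of_forall (fun n => aux_barDist_nonneg A _ _)⟩
    have hωt : Tendsto (fun n => ω (barDist A (u n) y)) atTop (nhds 0) := by
      have := (hω.cont 0 self_mem_Ici).tendsto.comp hbar'
      rwa [hω.zero] at this
    have hMt : Tendsto (fun n => M * ω (barDist A (u n) y)) atTop (nhds 0) := by
      have := hωt.const_mul M
      simpa using this
    apply squeeze_zero (fun n => dist_nonneg) _ hMt
    intro n
    rw [Real.dist_eq]
    exact hH j (u n) (aux_box_sub_cylClosed A j (hubox n)) y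
      (aux_box_sub_cylClosed A j hybox)
  have hle : y A.last ≤ g j y :=
    le_of_tendsto_of_tendsto' h1 h2 (fun n => (huS n).le)
  exact le_antisymm hle hge

/-- Lemma B: the graph point over a bar-interior point is a frontier point of `Ω`. -/
lemma aux_lemB {Ω : Set (EV N)} {A : Atlas N} {g : Fin A.s → EV N → ℝ}
    (hop : IsOpen Ω) (hd : AtlasDescribes A Ω g)
    (j : Fin A.s) (hj : (j : ℕ) < A.s') {y : EV N}
    (hy : ∀ i, i ≠ A.last → (A.a j i < y i ∧ y i < A.b j i)) :
    (A.r j).symm (WithLp.toLp 2 (Function.update y A.last (g j y))) ∈ frontier Ω := by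
  set p : EV N := WithLp.toLp 2 (Function.update y A.last (g j y)) with hp
  have hycl : y ∈ A.cylClosed j := fun i hi => ⟨(hy i hi).1.le, (hy i hi).2.le⟩
  have hgp : g j p = g j y :=
    hd.barOnly j p y (fun i hi => Function.update_of_ne hi _ _)
  have hbd := hd.bddAway j hj y hycl
  have hρ := A.ρpos
  have hpbox : p ∈ A.box j := by
    intro i
    by_cases hi : i = A.last
    · subst hi
      rw [hp, WithLp.ofLp_toLp, Function.update_self]
      constructor <;> linarith [hbd.1, hbd.2]
    · rw [hp, WithLp.ofLp_toLp, Function.update_of_ne hi]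
      exact hy i hi
  have hrΩo : IsOpen ((A.r j) '' Ω) := ((A.r j).toHomeomorph.isOpen_image).mpr hop
  have hS := aux_graph_inter hd j
  -- generic approximating points
  let upd : ℝ → EV N := fun t => WithLp.toLp 2 (Function.update y A.last (g j y - t))
  have hupd : ∀ t, upd t = WithLp.toLp 2 (Function.update y A.last (g j y - t)) := fun t => rfl
  have hmem : ∀ t : ℝ, 0 < t → t ≤ A.ρ/2 → upd t ∈ (A.r j) '' Ω := by
    intro t ht1 ht2
    rw [hupd]
    have hg : g j (WithLp.toLp 2 (Function.update y A.last (g j y - t))) = g j y :=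
      hd.barOnly j _ y (fun i hi => Function.update_of_ne hi _ _)
    have : WithLp.toLp 2 (Function.update y A.last (g j y - t)) ∈ (A.r j) '' Ω ∩ A.box j := by
      rw [hS]
      refine ⟨fun i hi => by rw [WithLp.ofLp_toLp, Function.update_of_ne hi]; exact hy i hi, ?_, ?_⟩
      · rw [WithLp.ofLp_toLp, Function.update_self]; linarith [hbd.1]
      · rw [WithLp.ofLp_toLp, Function.update_self, hg]; linarith
    exact this.1
  have hdistp : ∀ t : ℝ, dist (upd t) p = |t| := by
    intro t
    have h := aux_dist_eq_of_eq (upd t) p A.last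
      (fun k hk => by simp only [hupd, hp, Function.update_of_ne hk])
    have h2 : |upd t A.last - p A.last| = |t| := by
      rw [hupd, hp]
      simp only [WithLp.ofLp_toLp, Function.update_self]
      rw [show g j y - t - g j y = -t by ring, abs_neg]
    exact h.trans h2
  have hpcl : p ∈ closure ((A.r j) '' Ω) := by
    apply mem_closure_of_tendsto (f := fun n : ℕ => upd ((A.ρ/2)/(n+1))) (b := atTop)
    · apply tendsto_iff_dist_tendsto_zero.mpr
      have heq : ∀ n : ℕ, dist (upd ((A.ρ/2)/(n+1))) p = (A.ρ/2)/(n+1) := by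
        intro n
        rw [hdistp]
        exact abs_of_pos (by positivity)
      simp only [heq]
      have h0 : Tendsto (fun n : ℕ => (1:ℝ) / (n+1)) atTop (nhds 0) :=
        tendsto_one_div_add_atTop_nhds_zero_nat
      have := h0.const_mul (A.ρ/2)
      simp only [mul_one_div] at this
      simpa using this
    · apply Eventually.of_forall
      intro n
      apply hmem
      · positivity
      · apply div_le_self (by linarith)
        have : (1:ℝ) ≤ (n:ℝ)+1 := by
          exact_mod_cast Nat.one_le_iff_ne_zero.mpr (Nat.succ_ne_zero n)
        linarith
  have hpnot : p ∉ (A.r j) '' Ω := by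
    intro hmemp
    have : p ∈ (A.r j) '' Ω ∩ A.box j := ⟨hmemp, hpbox⟩
    rw [hS] at this
    have hlt := this.2.2
    rw [hgp] at hlt
    rw [hp] at hlt
    simp only [WithLp.ofLp_toLp, Function.update_self] at hlt
    exact lt_irrefl _ hlt
  have hpfr : p ∈ frontier ((A.r j) '' Ω) := by
    rw [hrΩo.frontier_eq]; exact ⟨hpcl, hpnot⟩
  have himg : (A.r j) '' frontier Ω = frontier ((A.r j) '' Ω) :=
    (A.r j).toHomeomorph.image_frontier Ω
  rw [← himg] at hpfr
  obtain ⟨q', hq', hq'e⟩ := hpfr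
  have : (A.r j).symm p = q' := by
    rw [← hq'e]
    exact (A.r j).symm_apply_apply q'
  rw [this]
  exact hq'

end Aux3
section Aux4
open Metric Bornology

variable {N : ℕ}

lemma aux_frontier_bounded {Ω : Set (EV N)} {A : Atlas N} {g : Fin A.s → EV N → ℝ}
    (hcl : InAtlasClass A Ω g) : IsBounded (frontier Ω) := by
  apply IsBounded.subset _ ((aux_frontier_sub_K hcl).trans
    (iUnion_mono (fun j => aux_K_sub_V A j)))
  exact isBounded_iUnion.mpr (fun j => aux_V_bounded A j)

lemma aux_frontier_compact {Ω : Set (EV N)} {A : Atlas N} {g : Fin A.s → EV N → ℝ}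
    (hcl : InAtlasClass A Ω g) : IsCompact (frontier Ω) :=
  Metric.isCompact_of_isClosed_isBounded isClosed_frontier (aux_frontier_bounded hcl)

lemma aux_frontier_nonempty (hN : 2 ≤ N) {Ω : Set (EV N)} {A : Atlas N}
    {g : Fin A.s → EV N → ℝ}
    (hcl : InAtlasClass A Ω g) : (frontier Ω).Nonempty := by
  by_contra hne
  rw [Set.not_nonempty_iff_eq_empty] at hne
  have hclop : IsClopen Ω := isClopen_iff_frontier_eq_empty.mpr hne
  have hΩb : IsBounded Ω := by
    apply IsBounded.subset _ (hcl.cover.trans (iUnion_mono (fun j =>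
      (fun x hx => hx.1 : innerPart (A.V j) A.ρ ⊆ A.V j))))
    exact isBounded_iUnion.mpr (fun j => aux_V_bounded A j)
  rcases isClopen_iff.mp hclop with h | h
  · obtain ⟨x, hx⟩ := hcl.meets ⟨0, A.spos⟩
    rw [h] at hx
    exact hx.2
  · -- Ω = univ is unbounded
    rw [h] at hΩb
    obtain ⟨R, hR⟩ := hΩb.subset_closedBall 0
    have h0 : (0 : EV N) ∈ Metric.closedBall (0 : EV N) R := hR (mem_univ _)
    have hRnn : 0 ≤ R := by simpa using h0
    set i0 : Fin N := ⟨0, by omega⟩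
    have hmem := hR (mem_univ (EuclideanSpace.single i0 (R+1)))
    rw [Metric.mem_closedBall, dist_zero_right] at hmem
    rw [EuclideanSpace.norm_single] at hmem
    rw [Real.norm_eq_abs, abs_of_pos (by linarith)] at hmem
    linarith

lemma aux_devSet_nonneg (S T : Set (EV N)) : 0 ≤ devSet S T :=
  Real.sSup_nonneg (by rintro d ⟨x, _, rfl⟩; exact infDist_nonneg)

lemma aux_devSet_bddAbove {S T : Set (EV N)} (hS : IsBounded S) (hT : T.Nonempty) :
    BddAbove ((fun x => infDist x T) '' S) := by
  obtain ⟨q0, hq0⟩ := hT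
  obtain ⟨R, hR⟩ := hS.subset_closedBall 0
  refine ⟨R + ‖q0‖, ?_⟩
  rintro d ⟨x, hx, rfl⟩
  have h1 : infDist x T ≤ dist x q0 := infDist_le_dist_of_mem hq0
  have h2 : dist x q0 ≤ ‖x‖ + ‖q0‖ := by
    calc dist x q0 ≤ dist x 0 + dist 0 q0 := dist_triangle _ _ _
      _ = ‖x‖ + ‖q0‖ := by rw [dist_zero_right, dist_comm, dist_zero_right]
  have h3 : ‖x‖ ≤ R := by
    have := hR hx
    rwa [Metric.mem_closedBall, dist_zero_right] at this
  linarith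

lemma aux_absdiff_le_B {A : Atlas N} {Ω₁ Ω₂ : Set (EV N)} {g₁ g₂ : Fin A.s → EV N → ℝ}
    (hd₁ : AtlasDescribes A Ω₁ g₁) (hd₂ : AtlasDescribes A Ω₂ g₂)
    (j : Fin A.s) {x : EV N} (hx : x ∈ A.cylClosed j) :
    |g₁ j x - g₂ j x| ≤ ∑ j', (A.b j' A.last - A.a j' A.last) := by
  have h1 := aux_g_range hd₁ j hx
  have h2 := aux_g_range hd₂ j hx
  have hle : |g₁ j x - g₂ j x| ≤ A.b j A.last - A.a j A.last := by
    rw [abs_le]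
    constructor <;> linarith [h1.1, h1.2, h2.1, h2.2]
  refine hle.trans ?_
  exact Finset.single_le_sum (f := fun j' => A.b j' A.last - A.a j' A.last)
    (fun j' _ => (sub_pos.mpr (A.ab j' A.last)).le) (Finset.mem_univ j)

lemma aux_distSmall_bddAbove {A : Atlas N} {Ω₁ Ω₂ : Set (EV N)} {g₁ g₂ : Fin A.s → EV N → ℝ}
    (hd₁ : AtlasDescribes A Ω₁ g₁) (hd₂ : AtlasDescribes A Ω₂ g₂) :
    BddAbove {d : ℝ | ∃ j, ∃ x ∈ A.cylSmall j, d = |g₁ j x - g₂ j x|} := by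
  refine ⟨∑ j', (A.b j' A.last - A.a j' A.last), ?_⟩
  rintro d ⟨j, x, hx, rfl⟩
  exact aux_absdiff_le_B hd₁ hd₂ j (aux_cylSmall_sub_cylClosed A j hx)

lemma aux_distSmall_nonneg {A : Atlas N} (g₁ g₂ : Fin A.s → EV N → ℝ) :
    0 ≤ atlasDistSmall A g₁ g₂ :=
  Real.sSup_nonneg (by rintro d ⟨j, x, hx, rfl⟩; exact abs_nonneg _)

lemma aux_distSmall_comm {A : Atlas N} (g₁ g₂ : Fin A.s → EV N → ℝ) :
    atlasDistSmall A g₂ g₁ = atlasDistSmall A g₁ g₂ := by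
  unfold atlasDistSmall
  congr 1
  ext d
  constructor
  · rintro ⟨j, x, hx, rfl⟩; exact ⟨j, x, hx, (abs_sub_comm _ _)⟩
  · rintro ⟨j, x, hx, rfl⟩; exact ⟨j, x, hx, (abs_sub_comm _ _)⟩

end Aux4
section Aux5
open Metric Bornology

variable {N : ℕ}

lemma aux_barDist_congr (A : Atlas N) {x x' : EV N} (y : EV N)
    (h : ∀ i, i ≠ A.last → x i = x' i) : barDist A x y = barDist A x' y := by
  unfold barDist
  congr 1
  apply Finset.sum_congr rfl
  intro i hi
  rw [h i (Finset.mem_erase.mp hi).1]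

lemma aux_dev_le {A : Atlas N} {ω : ℝ → ℝ} {M : ℝ} (hω : IsModulus ω)
    {Ω₁ Ω₂ : Set (EV N)} {g₁ g₂ : Fin A.s → EV N → ℝ}
    (hcl₁ : InAtlasClass A Ω₁ g₁) (hH₁ : HolderDescribed A M ω g₁)
    (hcl₂ : InAtlasClass A Ω₂ g₂) :
    devSet (frontier Ω₁) (frontier Ω₂) ≤ atlasDistSmall A g₁ g₂ := by
  apply Real.sSup_le _ (aux_distSmall_nonneg g₁ g₂)
  rintro d ⟨x, hx, rfl⟩
  obtain ⟨j, hKj⟩ := mem_iUnion.mp (aux_frontier_sub_K hcl₁ hx)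
  have hxV : x ∈ A.V j := aux_K_sub_V A j hKj
  have hj : (j : ℕ) < A.s' := by
    by_contra h
    have hmiss := hcl₁.bdryMisses j (not_lt.mp h)
    rw [Set.eq_empty_iff_forall_notMem] at hmiss
    exact hmiss x ⟨hxV, hx⟩
  have hcoords := aux_K_coords A j hKj
  have hρ := A.ρpos
  set y : EV N := A.r j x with hy
  have hybox : y ∈ A.box j := aux_mem_box_of_mem_V A j hxV
  have hgr : y A.last = g₁ j y :=
    aux_lemA hω hcl₁.isOpen hcl₁.describes hH₁ j hx hybox
  set p : EV N := WithLp.toLp 2 (Function.update y A.last (g₂ j y)) with hp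
  have hPfr : (A.r j).symm p ∈ frontier Ω₂ :=
    aux_lemB hcl₂.isOpen hcl₂.describes j hj (fun i hi => (hybox i))
  have hd1 : infDist x (frontier Ω₂) ≤ dist x ((A.r j).symm p) :=
    infDist_le_dist_of_mem hPfr
  have hd2 : dist x ((A.r j).symm p) = dist y p := by
    have h1 : dist x ((A.r j).symm p) = dist (A.r j x) (A.r j ((A.r j).symm p)) :=
      ((A.r j).dist_eq _ _).symm
    rw [h1, (A.r j).apply_symm_apply]
  have hd3 : dist y p = |g₁ j y - g₂ j y| := by
    rw [aux_dist_eq_of_eq y p A.last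
      (fun k hk => by simp only [hp, Function.update_of_ne hk])]
    rw [hp]
    simp only [Function.update_self]
    rw [hgr]
  have hyS : y ∈ A.cylSmall j := by
    intro i hi
    have h := hcoords i
    constructor <;> linarith [h.1, h.2]
  have hmem : |g₁ j y - g₂ j y| ∈
      {d : ℝ | ∃ j', ∃ x' ∈ A.cylSmall j', d = |g₁ j' x' - g₂ j' x'|} :=
    ⟨j, y, hyS, rfl⟩
  calc infDist x (frontier Ω₂) ≤ dist x ((A.r j).symm p) := hd1
    _ = |g₁ j y - g₂ j y| := by rw [hd2, hd3]
    _ ≤ atlasDistSmall A g₁ g₂ :=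
        le_csSup (aux_distSmall_bddAbove hcl₁.describes hcl₂.describes) hmem

lemma aux_key (hN : 2 ≤ N) {A : Atlas N} {ω : ℝ → ℝ} {M k : ℝ} (hω : IsModulus ω)
    (hM : 0 < M) (hk : 0 < k) (hlin : ∀ τ ∈ Icc (0:ℝ) 1, k * τ ≤ ω τ)
    {Ω₁ Ω₂ : Set (EV N)} {g₁ g₂ : Fin A.s → EV N → ℝ}
    (hcl₁ : InAtlasClass A Ω₁ g₁) (hH₁ : HolderDescribed A M ω g₁)
    (hcl₂ : InAtlasClass A Ω₂ g₂) (hH₂ : HolderDescribed A M ω g₂)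
    (he1 : devSet (frontier Ω₂) (frontier Ω₁) ≤ A.ρ/4)
    (he2 : devSet (frontier Ω₂) (frontier Ω₁) ≤ 1) :
    atlasDistSmall A g₁ g₂ ≤ (M + 1/k) * ω (devSet (frontier Ω₂) (frontier Ω₁)) := by
  set e := devSet (frontier Ω₂) (frontier Ω₁) with hee
  have he0 : 0 ≤ e := aux_devSet_nonneg _ _
  have hωe : 0 ≤ ω e := aux_omega_nonneg hω he0
  have hcoef : 0 ≤ M + 1/k := by positivity
  have hRHS : 0 ≤ (M + 1/k) * ω e := mul_nonneg hcoef hωe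
  apply Real.sSup_le _ hRHS
  rintro d ⟨j, x, hx, rfl⟩
  by_cases hj : (j : ℕ) < A.s'
  swap
  · rw [hcl₁.describes.flat j (not_lt.mp hj), hcl₂.describes.flat j (not_lt.mp hj)]
    simpa using hRHS
  have hρ := A.ρpos
  have hxCl : x ∈ A.cylClosed j := aux_cylSmall_sub_cylClosed A j hx
  have hbd₂ := hcl₂.describes.bddAway j hj x hxCl
  set p : EV N := WithLp.toLp 2 (Function.update x A.last (g₂ j x)) with hp
  have hPfr : (A.r j).symm p ∈ frontier Ω₂ :=
    aux_lemB hcl₂.isOpen hcl₂.describes j hj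
      (fun i hi => ⟨by linarith [(hx i hi).1], by linarith [(hx i hi).2]⟩)
  have hne₁ := aux_frontier_nonempty hN hcl₁
  obtain ⟨q, hq, hqd⟩ :=
    (aux_frontier_compact hcl₁).exists_infDist_eq_dist hne₁ ((A.r j).symm p)
  have hinf : infDist ((A.r j).symm p) (frontier Ω₁) ≤ e :=
    le_csSup (aux_devSet_bddAbove (aux_frontier_bounded hcl₂) hne₁)
      ⟨(A.r j).symm p, hPfr, rfl⟩
  have hdq : dist ((A.r j).symm p) q ≤ e := hqd ▸ hinf
  set y : EV N := A.r j q with hy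
  have hdyp : dist y p ≤ e := by
    have h1 : dist ((A.r j).symm p) q = dist (A.r j ((A.r j).symm p)) (A.r j q) :=
      ((A.r j).dist_eq _ _).symm
    rw [h1, (A.r j).apply_symm_apply] at hdq
    rw [dist_comm] at hdq
    exact hdq
  have hyc : ∀ i, |y i - p i| ≤ e := fun i => (aux_coord_dist_le y p i).trans hdyp
  have hybox : y ∈ A.box j := by
    intro i
    by_cases hi : i = A.last
    · subst hi
      have h1 := hyc A.last
      simp only [hp, Function.update_self] at h1
      rw [abs_le] at h1
      constructor <;> linarith [hbd₂.1, hbd₂.2, h1.1, h1.2, he1]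
    · have h1 := hyc i
      simp only [hp, Function.update_of_ne hi] at h1
      rw [abs_le] at h1
      have h2 := hx i hi
      constructor <;> linarith [h1.1, h1.2, h2.1, h2.2, he1]
  have hgr : y A.last = g₁ j y :=
    aux_lemA hω hcl₁.isOpen hcl₁.describes hH₁ j hq hybox
  have hbar : barDist A x y ≤ e := by
    have h1 : barDist A x y = barDist A p y :=
      aux_barDist_congr A y (fun i hi => by simp only [hp, Function.update_of_ne hi])
    rw [h1]
    calc barDist A p y ≤ dist p y := aux_barDist_le_dist A p y
      _ = dist y p := dist_comm _ _
      _ ≤ e := hdyp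
  have h1 : |g₁ j x - g₁ j y| ≤ M * ω (barDist A x y) :=
    hH₁ j x hxCl y (aux_box_sub_cylClosed A j hybox)
  have hmono : ω (barDist A x y) ≤ ω e :=
    hω.mono (mem_Ici.mpr (aux_barDist_nonneg A x y)) (mem_Ici.mpr he0) hbar
  have h2 : |g₁ j y - g₂ j x| ≤ e := by
    have h := hyc A.last
    simp only [hp, Function.update_self] at h
    rw [← hgr]
    exact h
  have h3 : e ≤ ω e / k := by
    have := hlin e ⟨he0, he2⟩
    rw [le_div_iff₀ hk]
    linarith
  calc |g₁ j x - g₂ j x| ≤ |g₁ j x - g₁ j y| + |g₁ j y - g₂ j x| := abs_sub_le _ _ _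
    _ ≤ M * ω e + ω e / k := by
        have hMle : M * ω (barDist A x y) ≤ M * ω e :=
          mul_le_mul_of_nonneg_left hmono hM.le
        linarith [h1, h2, h3]
    _ = (M + 1/k) * ω e := by ring

end Aux5
/-- comparison between the atlas distance of the derived atlas and the
Hausdorff–Pompeiu distance/deviation of the boundaries, on `C_M^ω(A)`. -/
theorem atlas_distance_vs_hausdorff
    (N : ℕ) (hN : 2 ≤ N) (A : Atlas N) (ω : ℝ → ℝ) (hω : IsModulus ω)
    (M : ℝ) (hM : 0 < M) :
    ∃ c : ℝ, 0 < c ∧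
      ∀ (Ω₁ Ω₂ : Set (EV N)) (g₁ g₂ : Fin A.s → EV N → ℝ),
        InAtlasClass A Ω₁ g₁ → HolderDescribed A M ω g₁ →
        InAtlasClass A Ω₂ g₂ → HolderDescribed A M ω g₂ →
        upperHP (frontier Ω₁) (frontier Ω₂) ≤ atlasDistSmall A g₁ g₂ ∧
        atlasDistSmall A g₁ g₂ ≤ c * ω (lowerHP (frontier Ω₁) (frontier Ω₂)) := by
  obtain ⟨k, hk, hlin⟩ := hω.lin
  set δ₀ : ℝ := min (A.ρ/4) (1/2) with hδ₀
  have hδpos : 0 < δ₀ := lt_min (by linarith [A.ρpos]) (by norm_num)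
  have hδle1 : δ₀ ≤ 1 := (min_le_right _ _).trans (by norm_num)
  have hωδ : 0 < ω δ₀ := lt_of_lt_of_le (mul_pos hk hδpos) (hlin δ₀ ⟨hδpos.le, hδle1⟩)
  haveI : Nonempty (Fin A.s) := ⟨⟨0, A.spos⟩⟩
  set B : ℝ := ∑ j', (A.b j' A.last - A.a j' A.last) with hB
  have hBpos : 0 < B :=
    Finset.sum_pos (fun j' _ => sub_pos.mpr (A.ab j' A.last)) Finset.univ_nonempty
  refine ⟨(M + 1/k) + B / ω δ₀, by positivity, ?_⟩
  intro Ω₁ Ω₂ g₁ g₂ hcl₁ hH₁ hcl₂ hH₂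
  constructor
  · refine max_le (aux_dev_le hω hcl₁ hH₁ hcl₂) ?_
    rw [← aux_distSmall_comm g₁ g₂]
    exact aux_dev_le hω hcl₂ hH₂ hcl₁
  · set d := lowerHP (frontier Ω₁) (frontier Ω₂) with hd
    have hd0 : 0 ≤ d := le_min (aux_devSet_nonneg _ _) (aux_devSet_nonneg _ _)
    have hωd0 : 0 ≤ ω d := aux_omega_nonneg hω hd0
    by_cases hcase : d < δ₀
    · have hd14 : d ≤ A.ρ/4 := le_trans hcase.le (min_le_left _ _)
      have hd1 : d ≤ 1 := le_trans hcase.le hδle1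
      have hmain : atlasDistSmall A g₁ g₂ ≤ (M + 1/k) * ω d := by
        rcases le_total (devSet (frontier Ω₂) (frontier Ω₁))
          (devSet (frontier Ω₁) (frontier Ω₂)) with h | h
        · have hde : d = devSet (frontier Ω₂) (frontier Ω₁) := min_eq_right h
          rw [hde]
          exact aux_key hN hω hM hk hlin hcl₁ hH₁ hcl₂ hH₂ (hde ▸ hd14) (hde ▸ hd1)
        · have hde : d = devSet (frontier Ω₁) (frontier Ω₂) := min_eq_left h
          rw [hde, ← aux_distSmall_comm g₁ g₂]
          exact aux_key hN hω hM hk hlin hcl₂ hH₂ hcl₁ hH₁ (hde ▸ hd14) (hde ▸ hd1)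
      have hq : 0 ≤ B / ω δ₀ := by positivity
      calc atlasDistSmall A g₁ g₂ ≤ (M + 1/k) * ω d := hmain
        _ ≤ ((M + 1/k) + B / ω δ₀) * ω d := by nlinarith
    · push_neg at hcase
      have hmono : ω δ₀ ≤ ω d := hω.mono (mem_Ici.mpr hδpos.le) (mem_Ici.mpr hd0) hcase
      have hB' : atlasDistSmall A g₁ g₂ ≤ B := by
        apply Real.sSup_le _ hBpos.le
        rintro dd ⟨j, x, hx, rfl⟩
        exact aux_absdiff_le_B hcl₁.describes hcl₂.describes j
          (aux_cylSmall_sub_cylClosed A j hx)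
      have hcoefnn : 0 ≤ M + 1/k := by positivity
      calc atlasDistSmall A g₁ g₂ ≤ B := hB'
        _ = (B / ω δ₀) * ω δ₀ := by field_simp
        _ ≤ (B / ω δ₀) * ω d := mul_le_mul_of_nonneg_left hmono (by positivity)
        _ ≤ ((M + 1/k) + B / ω δ₀) * ω d := by nlinarith

end
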